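/- arXiv:1008.1032 — 3 statements merged into one kernel-verified Lean document; each statement's English description precedes it below -/
import Mathlib

section
/- Let (X_n, Y_n) be a sequence of pairs of real random variables and suppose: (i) E| E[exp(iλX_n) | 𝒢_n] − exp(−λ²c₂/2) | → 0 for every real λ, where Y_n is 𝒢_n-measurable for a σ-algebra 𝒢_n; and (ii) Y_n converges in distribution to Y ~ N(μ̃, σ̃²). Then (X_n, Y_n) converges jointly in distribution to (X, Y) with X ~ N(0, c₂) independent of Y; consequently X_n + Y_n ⇒ N(μ̃, c₂ + σ̃²). -/
open MeasureTheory Filter Topology Complex ProbabilityTheory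

lemma aux_real_pullout_zero {Ω : Type*} {m : MeasurableSpace Ω} [m0 : MeasurableSpace Ω]
    (hm : m ≤ m0) (μ : Measure Ω) [IsProbabilityMeasure μ]
    {u v : Ω → ℝ} (hu : StronglyMeasurable[m] u) (hub : ∀ ω, ‖u ω‖ ≤ 1)
    (hv : Integrable v μ) (hv0 : μ[v|m] =ᵐ[μ] 0) :
    ∫ ω, u ω * v ω ∂μ = 0 := by
  have huv : Integrable (fun ω => u ω * v ω) μ :=
    hv.bdd_mul (hu.mono hm).aestronglyMeasurable (ae_of_all _ hub)
  calc ∫ ω, u ω * v ω ∂μ = ∫ ω, (μ[fun ω => u ω * v ω|m]) ω ∂μ :=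
        (integral_condExp hm).symm
    _ = ∫ ω, (u * μ[v|m]) ω ∂μ :=
        integral_congr_ae (condExp_mul_of_stronglyMeasurable_left hu huv hv)
    _ = 0 := by
        have h : (u * μ[v|m]) =ᵐ[μ] 0 := by
          filter_upwards [hv0] with ω hω
          simp [Pi.mul_apply, hω]
        rw [integral_congr_ae h]
        simp

lemma aux_condexp_re_zero {Ω : Type*} {m : MeasurableSpace Ω} [m0 : MeasurableSpace Ω]
    (hm : m ≤ m0) (μ : Measure Ω) [IsProbabilityMeasure μ]
    {d : Ω → ℂ} (hd : Integrable d μ) (hd0 : μ[d|m] =ᵐ[μ] 0) :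
    μ[fun ω => (d ω).re|m] =ᵐ[μ] 0 := by
  refine (ae_eq_condExp_of_forall_setIntegral_eq (μ := μ) hm hd.re
    (fun s _ _ => (integrable_zero Ω ℝ μ).integrableOn) (fun s hs hμs => ?_)
    stronglyMeasurable_zero.aestronglyMeasurable).symm
  have h1 : ∫ x in s, d x ∂μ = 0 := by
    rw [← setIntegral_condExp hm hd hs, integral_congr_ae (ae_restrict_of_ae hd0)]
    simp
  have h2 : ∫ x in s, (d x).re ∂μ = (∫ x in s, d x ∂μ).re := by
    simpa using integral_re (𝕜 := ℂ) hd.integrableOn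
  simp [h2, h1]

lemma aux_condexp_im_zero {Ω : Type*} {m : MeasurableSpace Ω} [m0 : MeasurableSpace Ω]
    (hm : m ≤ m0) (μ : Measure Ω) [IsProbabilityMeasure μ]
    {d : Ω → ℂ} (hd : Integrable d μ) (hd0 : μ[d|m] =ᵐ[μ] 0) :
    μ[fun ω => (d ω).im|m] =ᵐ[μ] 0 := by
  refine (ae_eq_condExp_of_forall_setIntegral_eq (μ := μ) hm hd.im
    (fun s _ _ => (integrable_zero Ω ℝ μ).integrableOn) (fun s hs hμs => ?_)
    stronglyMeasurable_zero.aestronglyMeasurable).symm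
  have h1 : ∫ x in s, d x ∂μ = 0 := by
    rw [← setIntegral_condExp hm hd hs, integral_congr_ae (ae_restrict_of_ae hd0)]
    simp
  have h2 : ∫ x in s, (d x).im ∂μ = (∫ x in s, d x ∂μ).im := by
    simpa using integral_im (𝕜 := ℂ) hd.integrableOn
  simp [h2, h1]

lemma aux_cplx_pullout_zero {Ω : Type*} {m : MeasurableSpace Ω} [m0 : MeasurableSpace Ω]
    (hm : m ≤ m0) (μ : Measure Ω) [IsProbabilityMeasure μ]
    {h d : Ω → ℂ} (hh : StronglyMeasurable[m] h) (hb : ∀ ω, ‖h ω‖ ≤ 1)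
    (hd : Integrable d μ) (hd0 : μ[d|m] =ᵐ[μ] 0) :
    ∫ ω, h ω * d ω ∂μ = 0 := by
  have hbre : ∀ ω, ‖(h ω).re‖ ≤ 1 := fun ω =>
    le_trans (by simpa using Complex.abs_re_le_norm (h ω)) (hb ω)
  have hbim : ∀ ω, ‖(h ω).im‖ ≤ 1 := fun ω =>
    le_trans (by simpa using Complex.abs_im_le_norm (h ω)) (hb ω)
  have hhre : StronglyMeasurable[m] fun ω => (h ω).re := Complex.continuous_re.comp_stronglyMeasurable hh
  have hhim : StronglyMeasurable[m] fun ω => (h ω).im := Complex.continuous_im.comp_stronglyMeasurable hh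
  have hdre : Integrable (fun ω => (d ω).re) μ := by simpa using hd.re
  have hdim : Integrable (fun ω => (d ω).im) μ := by simpa using hd.im
  have hdre0 := aux_condexp_re_zero hm μ hd hd0
  have hdim0 := aux_condexp_im_zero hm μ hd hd0
  have e1 := aux_real_pullout_zero hm μ hhre hbre hdre hdre0
  have e2 := aux_real_pullout_zero hm μ hhim hbim hdim hdim0
  have e3 := aux_real_pullout_zero hm μ hhre hbre hdim hdim0
  have e4 := aux_real_pullout_zero hm μ hhim hbim hdre hdre0
  have hint : Integrable (fun ω => h ω * d ω) μ :=
    hd.bdd_mul (hh.mono hm).aestronglyMeasurable (ae_of_all _ hb)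
  apply Complex.ext
  · have := integral_re (𝕜 := ℂ) hint
    simp only [RCLike.re_to_complex] at this
    rw [← this]
    have : ∀ ω, (h ω * d ω).re = (h ω).re * (d ω).re - (h ω).im * (d ω).im :=
      fun ω => Complex.mul_re _ _
    simp only [this]
    rw [integral_sub (hdre.bdd_mul (hhre.mono hm).aestronglyMeasurable (ae_of_all _ hbre))
      (hdim.bdd_mul (hhim.mono hm).aestronglyMeasurable (ae_of_all _ hbim))]
    simp [e1, e2]
  · have := integral_im (𝕜 := ℂ) hint
    simp only [RCLike.im_to_complex] at this
    rw [← this]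
    have : ∀ ω, (h ω * d ω).im = (h ω).re * (d ω).im + (h ω).im * (d ω).re :=
      fun ω => Complex.mul_im _ _
    simp only [this]
    rw [integral_add (hdim.bdd_mul (hhre.mono hm).aestronglyMeasurable (ae_of_all _ hbre))
      (hdre.bdd_mul (hhim.mono hm).aestronglyMeasurable (ae_of_all _ hbim))]
    simp [e3, e4]

/-- Pull-out property at the level of integrals for complex bounded `m`-measurable `h`. -/
lemma aux_pullout {Ω : Type*} {m : MeasurableSpace Ω} [m0 : MeasurableSpace Ω]
    (hm : m ≤ m0) (μ : Measure Ω) [IsProbabilityMeasure μ]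
    {h g : Ω → ℂ} (hh : StronglyMeasurable[m] h) (hb : ∀ ω, ‖h ω‖ ≤ 1)
    (hg : Integrable g μ) :
    ∫ ω, h ω * g ω ∂μ = ∫ ω, h ω * (μ[g|m]) ω ∂μ := by
  have hd : Integrable (fun ω => g ω - (μ[g|m]) ω) μ := hg.sub integrable_condExp
  have hd0 : μ[fun ω => g ω - (μ[g|m]) ω|m] =ᵐ[μ] 0 := by
    have h1 := condExp_sub (m := m) (f := g) (g := μ[g|m]) hg integrable_condExp
    have h2 : μ[μ[g|m]|m] = μ[g|m] :=
      condExp_of_stronglyMeasurable hm stronglyMeasurable_condExp integrable_condExp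
    filter_upwards [h1] with ω hω
    rw [h2] at hω
    show (μ[g - μ[g|m]|m]) ω = (0 : Ω → ℂ) ω
    simp only [Pi.sub_apply] at hω
    simp [hω]
  have key := aux_cplx_pullout_zero hm μ hh hb hd hd0
  have hint1 : Integrable (fun ω => h ω * g ω) μ :=
    hg.bdd_mul (hh.mono hm).aestronglyMeasurable (ae_of_all _ hb)
  have hint2 : Integrable (fun ω => h ω * (μ[g|m]) ω) μ :=
    integrable_condExp.bdd_mul (hh.mono hm).aestronglyMeasurable (ae_of_all _ hb)
  have : ∫ ω, (h ω * g ω - h ω * (μ[g|m]) ω) ∂μ = 0 := by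
    rw [← key]; congr 1; funext ω; ring
  rwa [integral_sub hint1 hint2, sub_eq_zero] at this

lemma aux_step {Ω : Type*} {m : MeasurableSpace Ω} [m0 : MeasurableSpace Ω]
    (hm : m ≤ m0) (μ : Measure Ω) [IsProbabilityMeasure μ]
    (X Y : Ω → ℝ) (hY : Measurable[m] Y) (l φ : ℝ) (c : ℂ)
    (hXint : Integrable (fun ω => Complex.exp (I * l * X ω)) μ) :
    ‖(∫ ω, Complex.exp (I * (l * X ω + φ * Y ω)) ∂μ) -
        c * ∫ ω, Complex.exp (I * φ * Y ω) ∂μ‖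
      ≤ ∫ ω, ‖(μ[fun ω' => Complex.exp (I * l * X ω') | m]) ω - c‖ ∂μ := by
  set h : Ω → ℂ := fun ω => Complex.exp (I * φ * Y ω) with hh_def
  set g : Ω → ℂ := fun ω => Complex.exp (I * l * X ω) with hg_def
  have hmeas : StronglyMeasurable[m] h := by
    have : Measurable[m] h :=
      ((Complex.measurable_ofReal.comp hY).const_mul (I * φ)).cexp
    exact this.stronglyMeasurable
  have hb : ∀ ω, ‖h ω‖ ≤ 1 := by
    intro ω
    have : I * (φ : ℂ) * (Y ω : ℂ) = ((φ * Y ω : ℝ) : ℂ) * I := by push_cast; ring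
    simp only [hh_def, this]
    rw [Complex.norm_exp_ofReal_mul_I]
  have hint_h : Integrable h μ :=
    (integrable_const (1 : ℝ)).mono' (hmeas.mono hm).aestronglyMeasurable (ae_of_all _ hb)
  have e1 : ∫ ω, Complex.exp (I * (l * X ω + φ * Y ω)) ∂μ = ∫ ω, h ω * g ω ∂μ := by
    apply integral_congr_ae; apply ae_of_all; intro ω
    simp only [hh_def, hg_def, ← Complex.exp_add]
    congr 1; ring
  have e2 := aux_pullout hm μ hmeas hb hXint
  have hint_hc : Integrable (fun ω => h ω * (μ[g|m]) ω) μ :=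
    integrable_condExp.bdd_mul (hmeas.mono hm).aestronglyMeasurable (ae_of_all _ hb)
  have hint_c : Integrable (fun ω => h ω * c) μ := hint_h.mul_const c
  have e3 : c * ∫ ω, h ω ∂μ = ∫ ω, h ω * c ∂μ := by
    rw [integral_mul_const]; ring
  have e4 : (∫ ω, h ω * (μ[g|m]) ω ∂μ) - ∫ ω, h ω * c ∂μ
      = ∫ ω, h ω * ((μ[g|m]) ω - c) ∂μ := by
    rw [← integral_sub hint_hc hint_c]
    apply integral_congr_ae; apply ae_of_all; intro ω; ring
  rw [e1, e2, e3, e4]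
  have hint_d : Integrable (fun ω => (μ[g|m]) ω - c) μ :=
    integrable_condExp.sub (integrable_const c)
  calc ‖∫ ω, h ω * ((μ[g|m]) ω - c) ∂μ‖
      ≤ ∫ ω, ‖h ω * ((μ[g|m]) ω - c)‖ ∂μ := norm_integral_le_integral_norm _
    _ ≤ ∫ ω, ‖(μ[g|m]) ω - c‖ ∂μ := by
        apply integral_mono
          ((hint_d.bdd_mul (hmeas.mono hm).aestronglyMeasurable (ae_of_all _ hb)).norm)
          hint_d.norm
        intro ω
        show ‖h ω * ((μ[g|m]) ω - c)‖ ≤ ‖(μ[g|m]) ω - c‖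
        rw [norm_mul]
        calc ‖h ω‖ * ‖(μ[g|m]) ω - c‖ ≤ 1 * ‖(μ[g|m]) ω - c‖ :=
              mul_le_mul_of_nonneg_right (hb ω) (norm_nonneg _)
          _ = ‖(μ[g|m]) ω - c‖ := by rw [one_mul]

set_option maxHeartbeats 400000 in
/-- Joint CLT from conditional characteristic function convergence:
if `E|E[e^{iλX_n}|𝒢_n] − e^{−λ²c₂/2}| → 0` with `Y_n` being `𝒢_n`-measurable, and
`Y_n ⇒ N(muT, σ̃²)`, then `(X_n, Y_n)` converges jointly in distribution to independent
`N(0,c₂) ⊗ N(muT,σ̃²)`, and `X_n + Y_n ⇒ N(muT, c₂ + σ̃²)` (all stated via characteristic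
functions, which characterize convergence in distribution). -/
theorem stmt_6 {Ω : Type*} [m0 : MeasurableSpace Ω] (μ : Measure Ω) [IsProbabilityMeasure μ]
    (X Y : ℕ → Ω → ℝ) (𝒢 : ℕ → MeasurableSpace Ω) (h𝒢 : ∀ n, 𝒢 n ≤ m0)
    (hYmeas : ∀ n, Measurable[𝒢 n] (Y n))
    (c₂ : ℝ) (hc₂ : 0 ≤ c₂) (muT : ℝ) (sig2 : ℝ) (hσ : 0 ≤ sig2)
    (hcond : ∀ l : ℝ,
      Tendsto (fun n => ∫ ω,
          ‖(μ[fun ω' => Complex.exp (I * l * X n ω') | 𝒢 n]) ω -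
            Complex.exp (-(l ^ 2 * c₂ / 2 : ℝ))‖ ∂μ)
        atTop (𝓝 0))
    (hY : ∀ t : ℝ,
      Tendsto (fun n => ∫ ω, Complex.exp (I * t * Y n ω) ∂μ) atTop
        (𝓝 (Complex.exp (I * t * muT - (t ^ 2 * sig2 / 2 : ℝ))))) :
    (∀ l φ : ℝ,
      Tendsto (fun n => ∫ ω, Complex.exp (I * (l * X n ω + φ * Y n ω)) ∂μ) atTop
        (𝓝 (Complex.exp (-(l ^ 2 * c₂ / 2 : ℝ)) *
          Complex.exp (I * φ * muT - (φ ^ 2 * sig2 / 2 : ℝ))))) ∧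
    (∀ t : ℝ,
      Tendsto (fun n => ∫ ω, Complex.exp (I * t * (X n ω + Y n ω)) ∂μ) atTop
        (𝓝 (Complex.exp (I * t * muT - (t ^ 2 * (c₂ + sig2) / 2 : ℝ))))) := by
  have key : ∀ l φ : ℝ,
      Tendsto (fun n => ∫ ω, Complex.exp (I * (l * X n ω + φ * Y n ω)) ∂μ) atTop
        (𝓝 (Complex.exp (-(l ^ 2 * c₂ / 2 : ℝ)) *
          Complex.exp (I * φ * muT - (φ ^ 2 * sig2 / 2 : ℝ)))) := by
    intro l φ
    have hcpos : 0 < ‖Complex.exp (-(l ^ 2 * c₂ / 2 : ℝ))‖ := by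
      rw [Complex.norm_exp]
      exact Real.exp_pos _
    have hev : ∀ᶠ n in atTop, Integrable (fun ω => Complex.exp (I * l * X n ω)) μ := by
      have h1 := (hcond l).eventually (gt_mem_nhds hcpos)
      filter_upwards [h1] with n hn
      by_contra hni
      rw [condExp_of_not_integrable hni] at hn
      simp only [Pi.zero_apply, zero_sub, map_neg] at hn
      rw [integral_const] at hn
      simp only [probReal_univ, one_smul, smul_eq_mul, one_mul] at hn
      rw [norm_neg] at hn
      exact lt_irrefl _ hn
    have hdiff : Tendsto (fun n =>
        (∫ ω, Complex.exp (I * (l * X n ω + φ * Y n ω)) ∂μ) -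
          Complex.exp (-(l ^ 2 * c₂ / 2 : ℝ)) * ∫ ω, Complex.exp (I * φ * Y n ω) ∂μ)
        atTop (𝓝 0) := by
      apply squeeze_zero_norm' _ (hcond l)
      filter_upwards [hev] with n hn
      have h2 := aux_step (h𝒢 n) μ (X n) (Y n) (hYmeas n) l φ
        (Complex.exp (-(l ^ 2 * c₂ / 2 : ℝ))) hn
      exact h2
    have hsum := hdiff.add ((hY φ).const_mul (Complex.exp (-(l ^ 2 * c₂ / 2 : ℝ))))
    rw [zero_add] at hsum
    have hfe : (fun n => ∫ ω, Complex.exp (I * (l * X n ω + φ * Y n ω)) ∂μ)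
        = fun n => ((∫ ω, Complex.exp (I * (l * X n ω + φ * Y n ω)) ∂μ) -
            Complex.exp (-(l ^ 2 * c₂ / 2 : ℝ)) * ∫ ω, Complex.exp (I * φ * Y n ω) ∂μ) +
            Complex.exp (-(l ^ 2 * c₂ / 2 : ℝ)) * ∫ ω, Complex.exp (I * φ * Y n ω) ∂μ := by
      funext n; ring
    rw [hfe]
    exact hsum
  refine ⟨key, fun t => ?_⟩
  have h1 := key t t
  have hfun : (fun n => ∫ ω, Complex.exp (I * t * (X n ω + Y n ω)) ∂μ)
      = fun n => ∫ ω, Complex.exp (I * ((t : ℝ) * X n ω + (t : ℝ) * Y n ω)) ∂μ := by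
    funext n
    apply integral_congr_ae; apply ae_of_all; intro ω
    show Complex.exp (I * (t : ℂ) * (((X n ω : ℝ) : ℂ) + ((Y n ω : ℝ) : ℂ)))
        = Complex.exp (I * ((t : ℂ) * ((X n ω : ℝ) : ℂ) + (t : ℂ) * ((Y n ω : ℝ) : ℂ)))
    have harg : (I * (t : ℂ) * (((X n ω : ℝ) : ℂ) + ((Y n ω : ℝ) : ℂ)))
        = I * ((t : ℂ) * ((X n ω : ℝ) : ℂ) + (t : ℂ) * ((Y n ω : ℝ) : ℂ)) := by ring
    rw [harg]
  have hlim : Complex.exp (-(t ^ 2 * c₂ / 2 : ℝ)) *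
      Complex.exp (I * t * muT - (t ^ 2 * sig2 / 2 : ℝ))
      = Complex.exp (I * t * muT - (t ^ 2 * (c₂ + sig2) / 2 : ℝ)) := by
    rw [← Complex.exp_add]
    have harg : (-((t ^ 2 * c₂ / 2 : ℝ) : ℂ)) + (I * (t : ℂ) * (muT : ℂ) - ((t ^ 2 * sig2 / 2 : ℝ) : ℂ))
        = I * (t : ℂ) * (muT : ℂ) - ((t ^ 2 * (c₂ + sig2) / 2 : ℝ) : ℂ) := by
      push_cast; ring
    rw [harg]
  rw [hfun, ← hlim]
  exact h1
end

section
/- Let F be a distribution function on (0,∞) with tail F̄ ∈ RV_{−1} (regularly varying of index −1). Then the function x ↦ ∫_0^x F̄(y) dy is Π-varying with auxiliary function x F̄(x); that is, for every t > 0, ( ∫_0^{tx} F̄(y) dy − ∫_0^x F̄(y) dy ) / (x F̄(x)) → log t as x → ∞. Consequently I(x) = ∫_0^x y F(dy) = ∫_0^x F̄(y) dy − x F̄(x) is also Π-varying with the same auxiliary function. -/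
open Filter Topology Set MeasureTheory intervalIntegral

/-- `g` is regularly varying at infinity with index `ρ`. -/
def RegularlyVarying (g : ℝ → ℝ) (ρ : ℝ) : Prop :=
  ∀ t : ℝ, 0 < t → Tendsto (fun x => g (t * x) / g x) atTop (𝓝 (t ^ ρ))

lemma aux_core (F : StieltjesFunction ℝ) (hF1 : ∀ x, F x < 1)
    (htail : RegularlyVarying (fun x => 1 - F x) (-1)) {t : ℝ} (ht : 1 < t) :
    Tendsto (fun x => ((∫ y in (0:ℝ)..(t * x), (1 - F y)) - ∫ y in (0:ℝ)..x, (1 - F y)) /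
      (x * (1 - F x))) atTop (𝓝 (Real.log t)) := by
  have hGpos : ∀ x, 0 < 1 - F x := fun x => by linarith [hF1 x]
  have hGanti : Antitone fun y => 1 - F y := fun a b hab => by
    simp only [sub_le_sub_iff_left]; exact F.mono hab
  have hGmeas : Measurable fun y => (1:ℝ) - F y := measurable_const.sub F.mono.measurable
  have hInt : ∀ a b : ℝ, IntervalIntegrable (fun y => 1 - F y) volume a b := fun a b =>
    hGanti.intervalIntegrable
  have main : Tendsto (fun x => ∫ s in (1:ℝ)..t, (1 - F (s * x)) / (1 - F x)) atTop
      (𝓝 (Real.log t)) := by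
    have h0 : (0:ℝ) ∉ Set.uIcc 1 t := by
      rw [Set.uIcc_of_le ht.le]; intro h; exact absurd h.1 (by norm_num)
    have hlog : Real.log t = ∫ s in (1:ℝ)..t, s⁻¹ := by
      rw [integral_inv h0, div_one]
    rw [hlog]
    apply intervalIntegral.tendsto_integral_filter_of_dominated_convergence (fun _ => (1:ℝ))
    · exact Eventually.of_forall fun x =>
        ((hGmeas.comp (measurable_id.mul_const x)).div_const _).aestronglyMeasurable
    · filter_upwards [eventually_gt_atTop (0:ℝ)] with x hx
      refine Eventually.of_forall fun s hs => ?_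
      rw [Set.uIoc_of_le ht.le] at hs
      have hsx : x ≤ s * x := le_mul_of_one_le_left hx.le hs.1.le
      rw [Real.norm_eq_abs, abs_of_nonneg (div_nonneg (hGpos _).le (hGpos _).le),
        div_le_one (hGpos x)]
      exact hGanti hsx
    · exact intervalIntegrable_const
    · refine Eventually.of_forall fun s hs => ?_
      rw [Set.uIoc_of_le ht.le] at hs
      have hs0 : (0:ℝ) < s := lt_trans one_pos hs.1
      have := htail s hs0
      rwa [Real.rpow_neg_one] at this
  refine main.congr' ?_
  filter_upwards [eventually_gt_atTop (0:ℝ)] with x hx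
  rw [intervalIntegral.integral_div,
    intervalIntegral.integral_comp_mul_right (fun y => 1 - F y) (ne_of_gt hx) (a := 1) (b := t),
    intervalIntegral.integral_interval_sub_left (hInt 0 (t * x)) (hInt 0 x),
    one_mul, smul_eq_mul]
  field_simp

lemma aux_part1 (F : StieltjesFunction ℝ) (hF1 : ∀ x, F x < 1)
    (htail : RegularlyVarying (fun x => 1 - F x) (-1)) :
    ∀ t : ℝ, 0 < t →
      Tendsto (fun x =>
          ((∫ y in (0:ℝ)..(t * x), (1 - F y)) - ∫ y in (0:ℝ)..x, (1 - F y)) /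
            (x * (1 - F x)))
        atTop (𝓝 (Real.log t)) := by
  have hGpos : ∀ x, 0 < 1 - F x := fun x => by linarith [hF1 x]
  intro t ht
  rcases lt_trichotomy t 1 with h | h | h
  · have hinv : 1 < t⁻¹ := (one_lt_inv₀ ht).2 h
    have key := aux_core F hF1 htail hinv
    have comp : Tendsto (fun x : ℝ => t * x) atTop atTop :=
      Tendsto.const_mul_atTop ht tendsto_id
    have key2 := key.comp comp
    have hratio := htail t ht
    rw [Real.rpow_neg_one] at hratio
    have hfac : Tendsto (fun x => t * ((1 - F (t * x)) / (1 - F x))) atTop (𝓝 (t * t⁻¹)) :=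
      hratio.const_mul t
    rw [mul_inv_cancel₀ (ne_of_gt ht)] at hfac
    have hmul := (key2.neg).mul hfac
    have hl : -Real.log t⁻¹ * 1 = Real.log t := by rw [Real.log_inv]; ring
    rw [hl] at hmul
    refine hmul.congr' ?_
    filter_upwards [eventually_gt_atTop (0:ℝ)] with x hx
    have htx : t⁻¹ * (t * x) = x := by field_simp
    simp only [Function.comp_def, htx]
    have h1 : x ≠ 0 := ne_of_gt hx
    have h2 : (1 - F x) ≠ 0 := ne_of_gt (hGpos x)
    have h3 : (1 - F (t * x)) ≠ 0 := ne_of_gt (hGpos (t * x))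
    have h4 : t ≠ 0 := ne_of_gt ht
    field_simp
    ring
  · subst h
    simp only [one_mul, sub_self, zero_div, Real.log_one]
    exact tendsto_const_nhds
  · exact aux_core F hF1 htail h

lemma aux_id (F : StieltjesFunction ℝ) {x : ℝ} (hx : 0 ≤ x) :
    ∫ y in Ioc (0:ℝ) x, y ∂F.measure = (∫ y in (0:ℝ)..x, (1 - F y)) - x * (1 - F x) := by
  set μ := F.measure.restrict (Ioc (0:ℝ) x) with hμ
  have hfin : F.measure (Ioc (0:ℝ) x) ≠ ⊤ := by
    rw [F.measure_Ioc]; exact ENNReal.ofReal_ne_top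
  have hidint : Integrable (fun y => y) μ := by
    refine Measure.integrableOn_of_bounded (M := x) hfin aestronglyMeasurable_id ?_
    filter_upwards [ae_restrict_mem measurableSet_Ioc] with y hy
    rw [Real.norm_eq_abs, abs_of_nonneg hy.1.le]; exact hy.2
  have hnn : 0 ≤ᵐ[μ] fun y => y := by
    filter_upwards [ae_restrict_mem measurableSet_Ioc] with y hy
    exact hy.1.le
  have hlayer := hidint.integral_eq_integral_meas_lt hnn
  have h1 : ∫ r in Ioi (0:ℝ), (μ {a : ℝ | r < a}).toReal
      = ∫ r in Ioi (0:ℝ), (Ioc (0:ℝ) x).indicator (fun r => F x - F r) r := by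
    refine setIntegral_congr_fun measurableSet_Ioi fun r hr => ?_
    have : {a : ℝ | r < a} = Ioi r := rfl
    rw [hμ, this, Measure.restrict_apply measurableSet_Ioi, Set.inter_comm,
      Set.Ioc_inter_Ioi]
    have hmax : (0:ℝ) ⊔ r = r := sup_eq_right.mpr (le_of_lt hr)
    rw [hmax, F.measure_Ioc]
    by_cases hrx : r ≤ x
    · rw [Set.indicator_of_mem (Set.mem_Ioc.mpr ⟨hr, hrx⟩),
        ENNReal.toReal_ofReal (sub_nonneg.mpr (F.mono hrx))]
    · rw [Set.indicator_of_notMem (fun hmem => hrx hmem.2),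
        ENNReal.ofReal_eq_zero.mpr (by linarith [F.mono (le_of_lt (not_le.1 hrx))]),
        ENNReal.toReal_zero]
  have h2 : ∫ r in Ioi (0:ℝ), (Ioc (0:ℝ) x).indicator (fun r => F x - F r) r
      = ∫ r in Ioc (0:ℝ) x, (F x - F r) := by
    rw [setIntegral_indicator measurableSet_Ioc,
      Set.inter_eq_self_of_subset_right Set.Ioc_subset_Ioi_self]
  have hFint : ∀ a b : ℝ, IntervalIntegrable (fun y => (F y : ℝ)) volume a b := fun a b =>
    F.mono.intervalIntegrable
  have h3 : ∫ r in Ioc (0:ℝ) x, (F x - F r) = x * F x - ∫ y in (0:ℝ)..x, (F y : ℝ) := by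
    rw [← intervalIntegral.integral_of_le hx,
      intervalIntegral.integral_sub intervalIntegrable_const (hFint 0 x),
      intervalIntegral.integral_const]
    simp [smul_eq_mul]
  have h4 : (∫ y in (0:ℝ)..x, (1 - F y)) = x - ∫ y in (0:ℝ)..x, (F y : ℝ) := by
    rw [intervalIntegral.integral_sub intervalIntegrable_const (hFint 0 x),
      intervalIntegral.integral_const]
    simp [smul_eq_mul]
  rw [hlayer]
  simp only [measureReal_def]
  rw [h1, h2, h3, h4]
  ring

/-- de Haan's theorem: if `F̄ = 1 − F ∈ RV_{−1}`, then `x ↦ ∫_0^x F̄(y) dy` is Π-varying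
with auxiliary function `x F̄(x)`, and so is `I(x) = ∫_0^x y F(dy) = ∫_0^x F̄ − x F̄(x)`. -/
theorem stmt_9 (F : StieltjesFunction ℝ) (hF0 : ∀ x ≤ 0, F x = 0) (hF1 : ∀ x, F x < 1)
    (htail : RegularlyVarying (fun x => 1 - F x) (-1)) :
    (∀ t : ℝ, 0 < t →
      Tendsto (fun x =>
          ((∫ y in (0:ℝ)..(t * x), (1 - F y)) - ∫ y in (0:ℝ)..x, (1 - F y)) /
            (x * (1 - F x)))
        atTop (𝓝 (Real.log t))) ∧
    (∀ t : ℝ, 0 < t →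
      Tendsto (fun x =>
          (((∫ y in Ioc (0:ℝ) (t * x), y ∂F.measure) -
              ∫ y in Ioc (0:ℝ) x, y ∂F.measure)) / (x * (1 - F x)))
        atTop (𝓝 (Real.log t))) := by
  have hGpos : ∀ x, 0 < 1 - F x := fun x => by linarith [hF1 x]
  have part1 := aux_part1 F hF1 htail
  refine ⟨part1, ?_⟩
  intro t ht
  have hratio := htail t ht
  rw [Real.rpow_neg_one] at hratio
  have hfac : Tendsto (fun x => t * ((1 - F (t * x)) / (1 - F x)) - 1) atTop
      (𝓝 (t * t⁻¹ - 1)) := (hratio.const_mul t).sub_const 1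
  rw [mul_inv_cancel₀ (ne_of_gt ht), sub_self] at hfac
  have hmain := (part1 t ht).sub hfac
  rw [sub_zero] at hmain
  refine hmain.congr' ?_
  filter_upwards [eventually_gt_atTop (0:ℝ)] with x hx
  have htx0 : (0:ℝ) ≤ t * x := by positivity
  rw [aux_id F htx0, aux_id F hx.le]
  have h1 : x ≠ 0 := ne_of_gt hx
  have h2 : (1 - F x) ≠ 0 := ne_of_gt (hGpos x)
  field_simp
  ring
end

section
/- Let e : (0,∞) → ℝ be Π-varying with auxiliary function b(x)/x where b ∈ RV_1, and let R_n be random variables with R_n/n → c₁ in probability for some constant c₁ > 0. Then ( e(R_n) − e(n) ) / ( b(n)/n ) → log c₁ in probability, and consequently (R_n e(R_n) − R_n e(n)) / b(n) → c₁ log c₁ in probability. -/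
open Filter Topology Set MeasureTheory

private lemma tim_aux {Ω : Type*} [MeasurableSpace Ω] (μ : Measure Ω)
    (f : ℕ → Ω → ℝ) (L : ℝ) (g : ℕ → Ω → ℝ) (c : ℝ)
    (hg : TendstoInMeasure μ g atTop (fun _ => c))
    (h : ∀ ε : ℝ, 0 < ε → ∃ δ : ℝ, 0 < δ ∧
      ∀ᶠ n in atTop, ∀ ω, δ ≤ |g n ω - c| ∨ |f n ω - L| < ε) :
    TendstoInMeasure μ f atTop (fun _ => L) := by
  rw [tendstoInMeasure_iff_dist] at hg ⊢
  intro ε hε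
  obtain ⟨δ, hδ, hN⟩ := h ε hε
  refine tendsto_of_tendsto_of_tendsto_of_le_of_le' tendsto_const_nhds (hg δ hδ)
    (Eventually.of_forall fun n => zero_le) ?_
  filter_upwards [hN] with n hn
  refine measure_mono fun ω hω => ?_
  simp only [mem_setOf_eq, Real.dist_eq] at hω ⊢
  rcases hn ω with h1 | h2
  · exact h1
  · exact absurd hω (not_le.mpr h2)

private lemma tim_mul {Ω : Type*} [MeasurableSpace Ω] (μ : Measure Ω)
    (f g : ℕ → Ω → ℝ) (L c : ℝ)
    (hf : TendstoInMeasure μ f atTop (fun _ => L))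
    (hg : TendstoInMeasure μ g atTop (fun _ => c)) :
    TendstoInMeasure μ (fun n ω => f n ω * g n ω) atTop (fun _ => L * c) := by
  rw [tendstoInMeasure_iff_dist] at hf hg ⊢
  intro ε hε
  set δ : ℝ := min 1 (ε / (|L| + |c| + 2)) with hδdef
  have hden : (0:ℝ) < |L| + |c| + 2 := by positivity
  have hδ : 0 < δ := lt_min one_pos (div_pos hε hden)
  have key : ∀ x y : ℝ, |x - L| < δ → |y - c| < δ → |x * y - L * c| < ε := by
    intro x y hx hy
    have h1 : |x * y - L * c| ≤ |x - L| * |y| + |L| * |y - c| := by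
      calc |x * y - L * c| = |(x - L) * y + L * (y - c)| := by ring_nf
        _ ≤ |(x - L) * y| + |L * (y - c)| := abs_add_le _ _
        _ = |x - L| * |y| + |L| * |y - c| := by rw [abs_mul, abs_mul]
    have hy' : |y| ≤ |c| + 1 := by
      have := abs_sub_abs_le_abs_sub y c
      have hδ1 : δ ≤ 1 := min_le_left _ _
      nlinarith [abs_nonneg (y - c)]
    have hδ2 : δ ≤ ε / (|L| + |c| + 2) := min_le_right _ _
    have : |x - L| * |y| + |L| * |y - c| ≤ δ * (|c| + 1) + |L| * δ := by
      have := abs_nonneg (x - L); have := abs_nonneg (y - c); have := abs_nonneg y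
      nlinarith [abs_nonneg L]
    have hfin : δ * (|c| + 1) + |L| * δ < ε := by
      have : δ * (|c| + 1) + |L| * δ = δ * (|L| + |c| + 1) := by ring
      rw [this]
      calc δ * (|L| + |c| + 1) ≤ (ε / (|L| + |c| + 2)) * (|L| + |c| + 1) := by
            apply mul_le_mul_of_nonneg_right hδ2; positivity
        _ < (ε / (|L| + |c| + 2)) * (|L| + |c| + 2) := by
            apply mul_lt_mul_of_pos_left (by linarith) (div_pos hε hden)
        _ = ε := div_mul_cancel₀ _ (ne_of_gt hden)
    linarith
  have hsub : ∀ n, {ω | ε ≤ dist (f n ω * g n ω) (L * c)} ⊆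
      {ω | δ ≤ dist (f n ω) L} ∪ {ω | δ ≤ dist (g n ω) c} := by
    intro n ω hω
    simp only [mem_setOf_eq, Real.dist_eq, mem_union] at hω ⊢
    by_contra hcon
    push_neg at hcon
    exact absurd hω (not_le.mpr (key _ _ hcon.1 hcon.2))
  have hlim : Tendsto (fun n => μ {ω | δ ≤ dist (f n ω) L} + μ {ω | δ ≤ dist (g n ω) c})
      atTop (𝓝 0) := by
    have := Tendsto.add (hf δ hδ) (hg δ hδ)
    simpa using this
  refine tendsto_of_tendsto_of_tendsto_of_le_of_le' tendsto_const_nhds hlim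
    (Eventually.of_forall fun n => zero_le) (Eventually.of_forall fun n => ?_)
  exact le_trans (measure_mono (hsub n)) (measure_union_le _ _)

/-- Substitution of random arguments into a Π-varying function:
if `e` is Π-varying with auxiliary function `b(x)/x` (locally uniformly), `b ∈ RV_1`, and
`R_n/n → c₁ > 0` in probability, then `(e(R_n) − e(n))/(b(n)/n) → log c₁` and
`(R_n e(R_n) − R_n e(n))/b(n) → c₁ log c₁` in probability. -/
theorem stmt_10 (e b : ℝ → ℝ) (hbRV : RegularlyVarying b 1) (hbpos : ∀ x, 0 < x → 0 < b x)
    (hPi : ∀ K : Set ℝ, IsCompact K → K ⊆ Ioi (0 : ℝ) →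
      TendstoUniformlyOn (fun x t => (e (t * x) - e x) / (b x / x)) Real.log atTop K)
    {Ω : Type*} [MeasurableSpace Ω] (μ : Measure Ω) [IsProbabilityMeasure μ]
    (R : ℕ → Ω → ℝ) (c₁ : ℝ) (hc₁ : 0 < c₁)
    (hR : TendstoInMeasure μ (fun n ω => R n ω / n) atTop (fun _ => c₁)) :
    TendstoInMeasure μ (fun n ω => (e (R n ω) - e n) / (b n / n)) atTop
        (fun _ => Real.log c₁) ∧
      TendstoInMeasure μ (fun n ω => (R n ω * e (R n ω) - R n ω * e n) / b n) atTop
        (fun _ => c₁ * Real.log c₁) := by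
  have hK : IsCompact (Icc (c₁/2) (2*c₁)) := isCompact_Icc
  have hKsub : Icc (c₁/2) (2*c₁) ⊆ Ioi (0:ℝ) := fun t ht => lt_of_lt_of_le (by linarith) ht.1
  have hunif := hPi _ hK hKsub
  have part1 : TendstoInMeasure μ (fun n ω => (e (R n ω) - e n) / (b n / n)) atTop
      (fun _ => Real.log c₁) := by
    apply tim_aux μ _ _ (fun n ω => R n ω / n) c₁ hR
    intro ε hε
    -- continuity of log at c₁
    have hcont : ContinuousAt Real.log c₁ := Real.continuousAt_log (ne_of_gt hc₁)
    rw [Metric.continuousAt_iff] at hcont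
    obtain ⟨δ₁, hδ₁, hlog⟩ := hcont (ε/2) (by linarith)
    set δ : ℝ := min δ₁ (c₁/2) with hδdef
    have hδ : 0 < δ := lt_min hδ₁ (by linarith)
    refine ⟨δ, hδ, ?_⟩
    -- uniform convergence
    rw [Metric.tendstoUniformlyOn_iff] at hunif
    obtain ⟨X, hX⟩ := (hunif (ε/2) (by linarith)).exists_forall_of_atTop
    filter_upwards [eventually_ge_atTop (max 1 ⌈X⌉₊)] with n hn ω
    have hn1 : 1 ≤ n := le_trans (le_max_left _ _) hn
    have hnpos : (0:ℝ) < n := by exact_mod_cast hn1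
    have hnX : X ≤ (n:ℝ) := le_trans (Nat.le_ceil X) (by exact_mod_cast le_trans (le_max_right _ _) hn)
    by_cases hω : δ ≤ |R n ω / n - c₁|
    · exact Or.inl hω
    · right
      push_neg at hω
      set t : ℝ := R n ω / n with ht
      have htK : t ∈ Icc (c₁/2) (2*c₁) := by
        have h1 : |t - c₁| < c₁/2 := lt_of_lt_of_le hω (min_le_right _ _)
        rw [abs_lt] at h1
        constructor <;> [linarith; linarith]
      have htn : t * n = R n ω := div_mul_cancel₀ _ (ne_of_gt hnpos)
      have hU := hX (n:ℝ) hnX t htK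
      rw [htn] at hU
      have hL : |Real.log t - Real.log c₁| < ε/2 := by
        have := hlog (show dist t c₁ < δ₁ by
          rw [Real.dist_eq]; exact lt_of_lt_of_le hω (min_le_left _ _))
        rwa [Real.dist_eq] at this
      rw [Real.dist_eq] at hU
      calc |(e (R n ω) - e n) / (b n / n) - Real.log c₁|
          ≤ |(e (R n ω) - e n) / (b n / n) - Real.log t| + |Real.log t - Real.log c₁| :=
            abs_sub_le _ _ _
        _ < ε/2 + ε/2 := by
            apply add_lt_add _ hL
            rw [abs_sub_comm]; exact hU
        _ = ε := by ring
  refine ⟨part1, ?_⟩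
  have hmul := tim_mul μ (fun n ω => R n ω / n)
    (fun n ω => (e (R n ω) - e n) / (b n / n)) c₁ (Real.log c₁) hR part1
  apply TendstoInMeasure.congr' _ (EventuallyEq.refl _ _) hmul
  filter_upwards [eventually_ge_atTop 1] with n hn
  apply Eventually.of_forall
  intro ω
  have hnpos : (0:ℝ) < n := by exact_mod_cast hn
  have hbn : b n ≠ 0 := ne_of_gt (hbpos _ hnpos)
  field_simp
end
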